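/- Let m ≥ 1 and let n = |Q₀| be even, char K arbitrary (or n arbitrary with char K = 2). For the truncated cyclic quiver algebra Λ = KQ/(KQ)_{≥2} with n vertices and automorphisms μ̄, η̄ as above, the automorphism μ̄ ∘ η̄^{-1} is inner; consequently Ω_{Λ^e}(Λ) ≅ _{η̄}Λ_1, i.e. the Calabi–Yau Frobenius dimension of Λ is 0. -/

import Mathlib

open TensorProduct

/-- Left multiplication by `b` on the first tensor factor of `Λ ⊗[K] Λ`. -/
noncomputable def lAct (K Λ : Type*) [CommRing K] [Ring Λ] [Algebra K Λ] (b : Λ) :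
    TensorProduct K Λ Λ →ₗ[K] TensorProduct K Λ Λ :=
  LinearMap.rTensor Λ (LinearMap.mulLeft K b)

/-- Right multiplication by `b` on the second tensor factor of `Λ ⊗[K] Λ`. -/
noncomputable def rAct (K Λ : Type*) [CommRing K] [Ring Λ] [Algebra K Λ] (b : Λ) :
    TensorProduct K Λ Λ →ₗ[K] TensorProduct K Λ Λ :=
  LinearMap.lTensor Λ (LinearMap.mulRight K b)

/-- for the truncated cyclic quiver algebra `Λ` with `n` vertices, if `n`
is even or `char K = 2`, then `μ̄ ∘ η̄⁻¹` is inner; consequently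
`Ω_{Λ^e}(Λ) ≅ _{η̄}Λ_1` as `Λ`-bimodules, i.e. the Calabi–Yau Frobenius dimension of
`Λ` is `0`. -/
theorem stmt_18 (K : Type*) [Field K] (n : ℕ) [NeZero n] (hn : 1 ≤ n)
    (hcase : Even n ∨ ringChar K = 2)
    (Λ : Type*) [Ring Λ] [Algebra K Λ]
    (e a : ZMod n → Λ)
    (bas : Module.Basis (ZMod n ⊕ ZMod n) K Λ)
    (hbas : ∀ i, bas (Sum.inl i) = e i ∧ bas (Sum.inr i) = a i)
    (hee : ∀ i j, e i * e j = if i = j then e i else 0)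
    (hea : ∀ i j, e i * a j = if i = j then a j else 0)
    (hae : ∀ i j, a i * e j = if j = i + 1 then a i else 0)
    (haa : ∀ i j, a i * a j = 0)
    (hone : (∑ i, e i) = 1)
    (μbar ηbar : Λ ≃ₐ[K] Λ)
    (hμe : ∀ i, μbar (e i) = e (i + 1))
    (hμa : ∀ i, μbar (a i) = -(a (i + 1)))
    (hηe : ∀ i, ηbar (e i) = e (i + 1))
    (hηa : ∀ i, ηbar (a i) = a (i + 1))
    (Ker : Submodule K (TensorProduct K Λ Λ))
    (hKer : Ker =
      Submodule.span K {t | ∃ b c i, t = lAct K Λ b (rAct K Λ c (e i ⊗ₜ[K] e i))} ⊓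
        LinearMap.ker (LinearMap.mul' K Λ)) :
    (∃ u : Λˣ, ∀ y : Λ,
        (μbar * ηbar⁻¹) y = (u : Λ) * y * ((u⁻¹ : Λˣ) : Λ)) ∧
    ∃ g : Λ →ₗ[K] TensorProduct K Λ Λ,
      Function.Injective g ∧ LinearMap.range g = Ker ∧
      (∀ b y, g (ηbar b * y) = lAct K Λ b (g y)) ∧
      (∀ b y, g (y * b) = rAct K Λ b (g y)) := by
  classical
  have hbe : ∀ i, bas (Sum.inl i) = e i := fun i => (hbas i).1
  have hba : ∀ i, bas (Sum.inr i) = a i := fun i => (hbas i).2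
  set s : ZMod n → K := fun i => (-1 : K) ^ (i.val) with hsdef
  have hs2 : ∀ i, s i * s i = 1 := by
    intro i
    simp only [hsdef, ← mul_pow, neg_mul_neg, one_mul, one_pow]
  have hs1 : ∀ i : ZMod n, s (i + 1) = - s i := by
    intro i
    rcases hcase with hcE | hc2
    · have h2 : 2 ≤ n := Nat.le_of_dvd (by omega) hcE.two_dvd
      haveI : Fact (1 < n) := ⟨by omega⟩
      have hv : (i + 1).val % 2 = (i.val + 1) % 2 := by
        rw [ZMod.val_add, ZMod.val_one, Nat.mod_mod_of_dvd _ hcE.two_dvd]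
      simp only [hsdef]
      rw [neg_one_pow_eq_pow_mod_two, hv, ← neg_one_pow_eq_pow_mod_two, pow_succ,
        mul_neg_one]
    · haveI : CharP K 2 := ringChar.of_eq hc2
      have hneg : ∀ x : K, -x = x := fun x => CharTwo.neg_eq x
      have hone' : (-1 : K) = 1 := hneg 1
      simp only [hsdef, hone', one_pow]
  -- part 1 : inner automorphism
  have part1 : ∃ u : Λˣ, ∀ y : Λ,
      (μbar * ηbar⁻¹) y = (u : Λ) * y * ((u⁻¹ : Λˣ) : Λ) := by
    set uval : Λ := ∑ i, s i • e i with hudef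
    have hue : ∀ i, uval * e i = s i • e i := by
      intro i
      rw [hudef, Finset.sum_mul]
      simp only [smul_mul_assoc, hee, smul_ite, smul_zero]
      simp
    have heu : ∀ i, e i * uval = s i • e i := by
      intro i
      rw [hudef, Finset.mul_sum]
      simp only [mul_smul_comm, hee, smul_ite, smul_zero]
      simp
    have hua : ∀ i, uval * a i = s i • a i := by
      intro i
      rw [hudef, Finset.sum_mul]
      simp only [smul_mul_assoc, hea, smul_ite, smul_zero]
      simp
    have hau : ∀ i, a i * uval = s (i + 1) • a i := by
      intro i
      rw [hudef, Finset.mul_sum]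
      simp only [mul_smul_comm, hae, smul_ite, smul_zero]
      simp
    have huu : uval * uval = 1 := by
      nth_rewrite 2 [hudef]
      rw [Finset.mul_sum]
      simp only [mul_smul_comm, hue, smul_smul, hs2, one_smul]
      exact hone
    refine ⟨⟨uval, uval, huu, huu⟩, ?_⟩
    have key : (LinearMap.mulRight K uval ∘ₗ LinearMap.mulLeft K uval : Λ →ₗ[K] Λ)
        = ((μbar.toLinearMap).comp (ηbar.symm.toLinearMap)) := by
      apply Module.Basis.ext bas
      intro j
      cases j with
      | inl i =>
        rw [hbe]
        have hsymm : ηbar.symm (e i) = e (i - 1) := by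
          apply (AlgEquiv.symm_apply_eq ηbar).2
          rw [hηe, sub_add_cancel]
        simp only [LinearMap.coe_comp, Function.comp_apply, LinearMap.mulLeft_apply,
          LinearMap.mulRight_apply, AlgEquiv.toLinearMap_apply]
        rw [hsymm, hμe, sub_add_cancel, hue, smul_mul_assoc, heu, smul_smul, hs2, one_smul]
      | inr i =>
        rw [hba]
        have hsymm : ηbar.symm (a i) = a (i - 1) := by
          apply (AlgEquiv.symm_apply_eq ηbar).2
          rw [hηa, sub_add_cancel]
        simp only [LinearMap.coe_comp, Function.comp_apply, LinearMap.mulLeft_apply,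
          LinearMap.mulRight_apply, AlgEquiv.toLinearMap_apply]
        rw [hsymm, hμa, sub_add_cancel, hua, smul_mul_assoc, hau, smul_smul, hs1,
          mul_neg, hs2, neg_smul, one_smul]
    intro y
    have := congrArg (fun f : Λ →ₗ[K] Λ => f y) key
    simp only [LinearMap.coe_comp, Function.comp_apply, LinearMap.mulLeft_apply,
      LinearMap.mulRight_apply, AlgEquiv.toLinearMap_apply] at this
    exact this.symm
  refine ⟨part1, ?_⟩
  -- part 2
  have hsub : ∀ i : ZMod n, i - 1 + 1 = i := fun i => sub_add_cancel i 1
  have hlAct : ∀ (b x y : Λ), lAct K Λ b (x ⊗ₜ[K] y) = (b * x) ⊗ₜ[K] y := fun b x y => by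
    simp [lAct]
  have hrAct : ∀ (b x y : Λ), rAct K Λ b (x ⊗ₜ[K] y) = x ⊗ₜ[K] (y * b) := fun b x y => by
    simp [rAct]
  have hlAct_add : ∀ (b c : Λ), lAct K Λ (b + c) = lAct K Λ b + lAct K Λ c := by
    intro b c
    apply TensorProduct.ext'
    intro x y
    simp [hlAct, add_mul, add_tmul]
  have hlAct_smul : ∀ (k : K) (b : Λ), lAct K Λ (k • b) = k • lAct K Λ b := by
    intro k b
    apply TensorProduct.ext'
    intro x y
    simp [hlAct, smul_mul_assoc, smul_tmul']
  have hlAct_zero : lAct K Λ (0 : Λ) = 0 := by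
    apply TensorProduct.ext'
    intro x y
    simp [hlAct]
  have hrAct_add : ∀ (b c : Λ), rAct K Λ (b + c) = rAct K Λ b + rAct K Λ c := by
    intro b c
    apply TensorProduct.ext'
    intro x y
    simp [hrAct, mul_add, tmul_add]
  have hrAct_smul : ∀ (k : K) (b : Λ), rAct K Λ (k • b) = k • rAct K Λ b := by
    intro k b
    apply TensorProduct.ext'
    intro x y
    simp [hrAct, mul_smul_comm, tmul_smul]
  have hrAct_zero : rAct K Λ (0 : Λ) = 0 := by
    apply TensorProduct.ext'
    intro x y
    simp [hrAct]
  set G : ZMod n ⊕ ZMod n → Λ ⊗[K] Λ := fun j =>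
    Sum.rec (fun i => s i • (a (i-1) ⊗ₜ[K] e i - e (i-1) ⊗ₜ[K] a (i-1)))
            (fun i => s i • (a (i-1) ⊗ₜ[K] a i)) j with hGdef
  set g : Λ →ₗ[K] Λ ⊗[K] Λ := Module.Basis.constr bas K G with hgdef
  have hgE : ∀ i, g (e i) = s i • (a (i-1) ⊗ₜ[K] e i - e (i-1) ⊗ₜ[K] a (i-1)) := fun i => by
    conv_lhs => rw [← hbe i]
    rw [hgdef, Module.Basis.constr_basis]
  have hgA : ∀ i, g (a i) = s i • (a (i-1) ⊗ₜ[K] a i) := fun i => by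
    conv_lhs => rw [← hba i]
    rw [hgdef, Module.Basis.constr_basis]
  have hbtop : ∀ b : Λ, b ∈ Submodule.span K (Set.range bas) := fun b => by
    rw [bas.span_eq]; trivial
  -- left compatibility
  have hmulLbas : ∀ (jb j' : ZMod n ⊕ ZMod n),
      g (ηbar (bas jb) * bas j') = lAct K Λ (bas jb) (g (bas j')) := by
    intro jb j'
    cases jb with
    | inl k =>
      rw [hbe]
      cases j' with
      | inl i =>
        rw [hbe, hηe, hee]
        by_cases h : k + 1 = i
        · subst h
          rw [if_pos rfl, hgE, add_sub_cancel_right, map_smul, map_sub, hlAct, hlAct,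
            hea, hee, if_pos rfl, if_pos rfl]
        · have hc : ¬ k = i - 1 := fun hc => h (eq_sub_iff_add_eq.1 hc)
          rw [if_neg h, map_zero, hgE, map_smul, map_sub, hlAct, hlAct, hea, hee,
            if_neg hc, if_neg hc]
          simp
      | inr i =>
        rw [hba, hηe, hea]
        by_cases h : k + 1 = i
        · subst h
          rw [if_pos rfl, hgA, add_sub_cancel_right, map_smul, hlAct, hea, if_pos rfl]
        · have hc : ¬ k = i - 1 := fun hc => h (eq_sub_iff_add_eq.1 hc)
          rw [if_neg h, map_zero, hgA, map_smul, hlAct, hea, if_neg hc]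
          simp
    | inr k =>
      rw [hba]
      cases j' with
      | inl i =>
        rw [hbe, hηa, hae]
        by_cases h : i = k + 1 + 1
        · subst h
          rw [if_pos rfl, hgA, hgE, add_sub_cancel_right, add_sub_cancel_right,
            map_smul, map_sub, hlAct, hlAct, haa, hae, if_pos rfl, hs1 (k+1),
            zero_tmul, zero_sub, neg_smul, smul_neg, neg_neg]
        · have hc : ¬ i - 1 = k + 1 := fun hc => h (by rw [← hsub i, hc])
          rw [if_neg h, map_zero, hgE, map_smul, map_sub, hlAct, hlAct, haa, hae,
            if_neg hc, zero_tmul, zero_sub]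
          simp
      | inr i =>
        rw [hba, hηa, haa, map_zero, hgA, map_smul, hlAct, haa]
        simp
  have hmulL : ∀ b y, g (ηbar b * y) = lAct K Λ b (g y) := by
    intro b
    refine Submodule.span_induction ?_ ?_ ?_ ?_ (hbtop b)
    · rintro x ⟨j, rfl⟩ y
      refine Submodule.span_induction ?_ ?_ ?_ ?_ (hbtop y)
      · rintro z ⟨j', rfl⟩
        exact hmulLbas j j'
      · simp
      · intro z w _ _ hz hw
        rw [mul_add, map_add, hz, hw, map_add g z w]
        exact ((lAct K Λ (bas j)).map_add (g z) (g w)).symm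
      · intro k z _ hz
        rw [mul_smul_comm, map_smul, hz, map_smul g k z]
        exact ((lAct K Λ (bas j)).map_smul k (g z)).symm
    · intro y
      simp [hlAct_zero]
    · intro x z _ _ hx hz y
      rw [map_add, add_mul, map_add, hx y, hz y, hlAct_add]
      rfl
    · intro k x _ hx y
      rw [map_smul, smul_mul_assoc, map_smul, hx y, hlAct_smul]
      rfl
  -- right compatibility
  have hmulRbas : ∀ (jb j' : ZMod n ⊕ ZMod n),
      g (bas j' * bas jb) = rAct K Λ (bas jb) (g (bas j')) := by
    intro jb j'
    cases jb with
    | inl k =>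
      rw [hbe]
      cases j' with
      | inl i =>
        rw [hbe, hee]
        by_cases h : i = k
        · subst h
          rw [if_pos rfl, hgE, map_smul, map_sub, hrAct, hrAct, hee, hae, hsub,
            if_pos rfl, if_pos rfl]
        · rw [if_neg h, map_zero, hgE, map_smul, map_sub, hrAct, hrAct, hee, hae, hsub,
            if_neg h, if_neg (fun hc : k = i => h hc.symm)]
          simp
      | inr i =>
        rw [hba, hae]
        by_cases h : k = i + 1
        · subst h
          rw [if_pos rfl, hgA, map_smul, hrAct, hae, if_pos rfl]
        · rw [if_neg h, map_zero, hgA, map_smul, hrAct, hae, if_neg h]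
          simp
    | inr k =>
      rw [hba]
      cases j' with
      | inl i =>
        rw [hbe, hea]
        by_cases h : i = k
        · subst h
          rw [if_pos rfl, hgA, hgE, map_smul, map_sub, hrAct, hrAct, hea, haa,
            if_pos rfl, tmul_zero, sub_zero]
        · rw [if_neg h, map_zero, hgE, map_smul, map_sub, hrAct, hrAct, hea, haa,
            if_neg h, tmul_zero]
          simp
      | inr i =>
        rw [hba, haa, map_zero, hgA, map_smul, hrAct, haa, tmul_zero, smul_zero]
  have hmulR : ∀ b y, g (y * b) = rAct K Λ b (g y) := by
    intro b
    refine Submodule.span_induction ?_ ?_ ?_ ?_ (hbtop b)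
    · rintro x ⟨j, rfl⟩ y
      refine Submodule.span_induction ?_ ?_ ?_ ?_ (hbtop y)
      · rintro z ⟨j', rfl⟩
        exact hmulRbas j j'
      · simp
      · intro z w _ _ hz hw
        rw [add_mul, map_add, hz, hw, map_add g z w]
        exact ((rAct K Λ (bas j)).map_add (g z) (g w)).symm
      · intro k z _ hz
        rw [smul_mul_assoc, map_smul, hz, map_smul g k z]
        exact ((rAct K Λ (bas j)).map_smul k (g z)).symm
    · intro y
      simp [hrAct_zero]
    · intro x z _ _ hx hz y
      rw [mul_add, map_add, hx y, hz y, hrAct_add]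
      rfl
    · intro k x _ hx y
      rw [mul_smul_comm, map_smul, hx y, hrAct_smul]
      rfl
  -- injectivity
  have hinj : Function.Injective g := by
    set Hv : (ZMod n ⊕ ZMod n) → (ZMod n ⊕ ZMod n) → Λ := fun p q =>
      Sum.rec (fun _ => Sum.rec (fun _ => (0 : Λ)) (fun _ => (0 : Λ)) q)
        (fun j => Sum.rec (fun k => if k = j + 1 then s (j+1) • e (j+1) else 0)
          (fun k => if k = j + 1 then s (j+1) • a (j+1) else 0) q) p with hHvdef
    set H : Λ ⊗[K] Λ →ₗ[K] Λ :=
      TensorProduct.lift (Module.Basis.constr bas K (fun p => Module.Basis.constr bas K (fun q => Hv p q)))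
      with hHdef
    have hH : ∀ p q, H (bas p ⊗ₜ[K] bas q) = Hv p q := by
      intro p q
      rw [hHdef, TensorProduct.lift.tmul, Module.Basis.constr_basis, Module.Basis.constr_basis]
    have hHg : ∀ j, H (g (bas j)) = bas j := by
      intro j
      cases j with
      | inl i =>
        rw [hbe, hgE, map_smul, map_sub, ← hba (i-1), ← hbe i, ← hbe (i-1), hH, hH]
        have h1 : Hv (Sum.inr (i-1)) (Sum.inl i) = s i • e i := by
          rw [hHvdef]
          simp only [Sum.rec]
          rw [if_pos (hsub i).symm, hsub]
        have h2 : Hv (Sum.inl (i-1)) (Sum.inr (i-1)) = 0 := rfl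
        rw [h1, h2, sub_zero, smul_smul, hs2, one_smul]
        exact (hbe i).symm
      | inr i =>
        rw [hba, hgA, map_smul, ← hba (i-1), ← hba i, hH]
        have h1 : Hv (Sum.inr (i-1)) (Sum.inr i) = s i • a i := by
          rw [hHvdef]
          simp only [Sum.rec]
          rw [if_pos (hsub i).symm, hsub]
        rw [h1, smul_smul, hs2, one_smul]
        exact (hba i).symm
    have hHg' : ∀ x, H (g x) = x := by
      intro x
      have : (H ∘ₗ g) = LinearMap.id := Module.Basis.ext bas (fun j => by
        simpa using hHg j)
      calc H (g x) = (H ∘ₗ g) x := rfl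
        _ = x := by rw [this]; rfl
    exact Function.LeftInverse.injective hHg'
  -- the span set
  have hlr : ∀ (b c : Λ) (i : ZMod n),
      lAct K Λ b (rAct K Λ c (e i ⊗ₜ[K] e i)) = (b * e i) ⊗ₜ[K] (e i * c) := by
    intro b c i
    rw [hrAct, hlAct]
  set SSet : Set (Λ ⊗[K] Λ) :=
    {t | ∃ b c i, t = lAct K Λ b (rAct K Λ c (e i ⊗ₜ[K] e i))} with hSdef
  have hmemS : ∀ (b c : Λ) (i : ZMod n), (b * e i) ⊗ₜ[K] (e i * c) ∈ SSet := by
    intro b c i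
    exact ⟨b, c, i, (hlr b c i).symm⟩
  have hE : ∀ i : ZMod n, (e i ⊗ₜ[K] e i) ∈ SSet := fun i => by
    have := hmemS (e i) (e i) i
    rwa [hee, if_pos rfl] at this
  have hA : ∀ i : ZMod n, (a (i-1) ⊗ₜ[K] e i) ∈ SSet := fun i => by
    have := hmemS (a (i-1)) (e i) i
    rwa [hae, hsub, if_pos rfl, hee, if_pos rfl] at this
  have hB : ∀ i : ZMod n, (e i ⊗ₜ[K] a i) ∈ SSet := fun i => by
    have := hmemS (e i) (a i) i
    rwa [hee, if_pos rfl, hea, if_pos rfl] at this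
  have hC : ∀ i : ZMod n, (a (i-1) ⊗ₜ[K] a i) ∈ SSet := fun i => by
    have := hmemS (a (i-1)) (a i) i
    rwa [hae, hsub, if_pos rfl, hea, if_pos rfl] at this
  set W : Submodule K (Λ ⊗[K] Λ) := Submodule.span K SSet with hWdef
  -- range g ≤ Ker
  have hgKer : ∀ j, g (bas j) ∈ Ker := by
    intro j
    rw [hKer]
    refine Submodule.mem_inf.2 ⟨?_, ?_⟩
    · cases j with
      | inl i =>
        rw [hbe, hgE]
        exact Submodule.smul_mem _ _ (Submodule.sub_mem _
          (Submodule.subset_span (hA i)) (Submodule.subset_span (hB (i-1))))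
      | inr i =>
        rw [hba, hgA]
        exact Submodule.smul_mem _ _ (Submodule.subset_span (hC i))
    · cases j with
      | inl i =>
        rw [hbe, hgE]
        refine LinearMap.mem_ker.2 ?_
        rw [map_smul, map_sub, LinearMap.mul'_apply, LinearMap.mul'_apply,
          hae, hsub, if_pos rfl, hea, if_pos rfl, sub_self, smul_zero]
      | inr i =>
        rw [hba, hgA]
        refine LinearMap.mem_ker.2 ?_
        rw [map_smul, LinearMap.mul'_apply, haa, smul_zero]
  have hle : LinearMap.range g ≤ Ker := by
    rintro x ⟨y, rfl⟩
    refine Submodule.span_induction ?_ ?_ ?_ ?_ (hbtop y)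
    · rintro z ⟨j, rfl⟩
      exact hgKer j
    · simp
    · intro z w _ _ hz hw
      rw [map_add]
      exact Ker.add_mem hz hw
    · intro k z _ hz
      rw [map_smul]
      exact Ker.smul_mem k hz
  -- finrank bound on W
  haveI : Module.Finite K Λ := Module.Finite.of_basis bas
  set v : (ZMod n × Fin 4) → Λ ⊗[K] Λ := fun p =>
    ![e p.1 ⊗ₜ[K] e p.1, a (p.1-1) ⊗ₜ[K] e p.1, e p.1 ⊗ₜ[K] a p.1,
      a (p.1-1) ⊗ₜ[K] a p.1] p.2 with hvdef
  have hv0 : ∀ i, v (i, 0) = e i ⊗ₜ[K] e i := fun i => rfl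
  have hv1 : ∀ i, v (i, 1) = a (i-1) ⊗ₜ[K] e i := fun i => rfl
  have hv2 : ∀ i, v (i, 2) = e i ⊗ₜ[K] a i := fun i => rfl
  have hv3 : ∀ i, v (i, 3) = a (i-1) ⊗ₜ[K] a i := fun i => rfl
  have hsubspan : SSet ⊆ ↑(Submodule.span K (Set.range v)) := by
    rintro x ⟨b, c, i, rfl⟩
    rw [hlr]
    have hb : b * e i ∈ Submodule.span K ({e i, a (i-1)} : Set Λ) := by
      have h1 := Submodule.apply_mem_span_image_of_mem_span
        (LinearMap.mulRight K (e i)) (hbtop b)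
      have h2 : (LinearMap.mulRight K (e i)) '' (Set.range bas) ⊆
          ↑(Submodule.span K ({e i, a (i-1)} : Set Λ)) := by
        rintro _ ⟨_, ⟨j, rfl⟩, rfl⟩
        cases j with
        | inl k =>
          rw [hbe]
          simp only [LinearMap.mulRight_apply]
          rw [hee]
          split_ifs with h
          · subst h
            exact Submodule.subset_span (Set.mem_insert _ _)
          · exact (Submodule.span K _).zero_mem
        | inr k =>
          rw [hba]
          simp only [LinearMap.mulRight_apply]
          rw [hae]
          split_ifs with h
          · have hk : k = i - 1 := eq_sub_iff_add_eq.2 h.symm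
            subst hk
            exact Submodule.subset_span (Set.mem_insert_of_mem _ rfl)
          · exact (Submodule.span K _).zero_mem
      have h3 := Submodule.span_le.2 h2 h1
      simpa using h3
    have hc : e i * c ∈ Submodule.span K ({e i, a i} : Set Λ) := by
      have h1 := Submodule.apply_mem_span_image_of_mem_span
        (LinearMap.mulLeft K (e i)) (hbtop c)
      have h2 : (LinearMap.mulLeft K (e i)) '' (Set.range bas) ⊆
          ↑(Submodule.span K ({e i, a i} : Set Λ)) := by
        rintro _ ⟨_, ⟨j, rfl⟩, rfl⟩
        cases j with
        | inl k =>
          rw [hbe]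
          simp only [LinearMap.mulLeft_apply]
          rw [hee]
          split_ifs with h
          · subst h
            exact Submodule.subset_span (Set.mem_insert _ _)
          · exact (Submodule.span K _).zero_mem
        | inr k =>
          rw [hba]
          simp only [LinearMap.mulLeft_apply]
          rw [hea]
          split_ifs with h
          · subst h
            exact Submodule.subset_span (Set.mem_insert_of_mem _ rfl)
          · exact (Submodule.span K _).zero_mem
      have h3 := Submodule.span_le.2 h2 h1
      simpa using h3
    obtain ⟨α, β, hab⟩ := Submodule.mem_span_pair.1 hb
    obtain ⟨γ, δ, hcd⟩ := Submodule.mem_span_pair.1 hc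
    rw [← hab, ← hcd]
    rw [add_tmul, tmul_add, tmul_add]
    simp only [← smul_tmul', tmul_smul]
    refine Submodule.add_mem _ (Submodule.add_mem _ ?_ ?_) (Submodule.add_mem _ ?_ ?_)
    · exact Submodule.smul_mem _ _ (Submodule.smul_mem _ _
        (Submodule.subset_span ⟨(i, 0), (hv0 i)⟩))
    · exact Submodule.smul_mem _ _ (Submodule.smul_mem _ _
        (Submodule.subset_span ⟨(i, 2), (hv2 i)⟩))
    · exact Submodule.smul_mem _ _ (Submodule.smul_mem _ _
        (Submodule.subset_span ⟨(i, 1), (hv1 i)⟩))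
    · exact Submodule.smul_mem _ _ (Submodule.smul_mem _ _
        (Submodule.subset_span ⟨(i, 3), (hv3 i)⟩))
  have hWle : W ≤ Submodule.span K (Set.range v) := Submodule.span_le.2 hsubspan
  have hfW : Module.finrank K W ≤ 4 * n := by
    have him : Set.range v = ↑(Finset.image v Finset.univ) := by
      simp
    have h4 := finrank_span_finset_le_card (R := K) (Finset.image v Finset.univ)
    have hcard : (Finset.image v Finset.univ).card ≤ 4 * n := by
      calc (Finset.image v Finset.univ).card ≤ Finset.univ.card :=
            Finset.card_image_le
        _ = Fintype.card (ZMod n × Fin 4) := rfl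
        _ = n * 4 := by rw [Fintype.card_prod, ZMod.card, Fintype.card_fin]
        _ = 4 * n := Nat.mul_comm n 4
    have hmono := Submodule.finrank_mono hWle
    calc Module.finrank K W ≤ Module.finrank K (Submodule.span K (Set.range v)) := hmono
      _ ≤ 4 * n := by
          rw [him] at *
          exact le_trans h4 hcard
  -- rank-nullity for mul' restricted to W
  set f' := (LinearMap.mul' K Λ).domRestrict W with hf'def
  have hrangef : LinearMap.range f' = ⊤ := by
    rw [hf'def, LinearMap.range_domRestrict]
    refine top_unique ?_
    rw [← bas.span_eq]
    refine Submodule.span_le.2 ?_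
    rintro _ ⟨j, rfl⟩
    cases j with
    | inl i =>
      rw [hbe]
      refine Submodule.mem_map.2 ⟨e i ⊗ₜ[K] e i, Submodule.subset_span (hE i), ?_⟩
      rw [LinearMap.mul'_apply, hee, if_pos rfl]
    | inr i =>
      rw [hba]
      refine Submodule.mem_map.2 ⟨e i ⊗ₜ[K] a i, Submodule.subset_span (hB i), ?_⟩
      rw [LinearMap.mul'_apply, hea, if_pos rfl]
  have hrn := LinearMap.finrank_range_add_finrank_ker f'
  have hfr2 : Module.finrank K (LinearMap.range f') = n + n := by
    rw [hrangef, finrank_top, Module.finrank_eq_card_basis bas, Fintype.card_sum, ZMod.card]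
  have hkerf : Module.finrank K Ker = Module.finrank K (LinearMap.ker f') := by
    have h1 : LinearMap.ker f' =
        Submodule.comap W.subtype (LinearMap.ker (LinearMap.mul' K Λ)) :=
      LinearMap.ker_domRestrict W _
    have h2 : Submodule.map W.subtype
        (Submodule.comap W.subtype (LinearMap.ker (LinearMap.mul' K Λ)))
        = W ⊓ LinearMap.ker (LinearMap.mul' K Λ) :=
      Submodule.map_comap_subtype W _
    rw [hKer, ← h2, h1]
    exact (LinearEquiv.finrank_eq
      (Submodule.equivSubtypeMap W
        (Submodule.comap W.subtype (LinearMap.ker (LinearMap.mul' K Λ))))).symm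
  have hKerle : Module.finrank K Ker ≤ n + n := by
    omega
  have hrg : Module.finrank K (LinearMap.range g) = n + n := by
    rw [LinearMap.finrank_range_of_inj hinj, Module.finrank_eq_card_basis bas,
      Fintype.card_sum, ZMod.card]
  have hEq : LinearMap.range g = Ker :=
    Submodule.eq_of_le_of_finrank_le hle (by omega)
  exact ⟨g, hinj, hEq, hmulL, hmulR⟩
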